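/- Let ρ > 0, let D⁺ = {z ∈ ℂ : |z| < ρ and Im z > 0} be the open upper half-disk and let I = {x ∈ ℝ : |x| < ρ}, regarded as a subset of ℂ. Let y : ℂ → ℝ be differentiable at every point of D⁺, let ȳ : ℂ → ℝ be continuous on D⁺ ∪ I with ȳ = y on D⁺, and let p₁, p₂ : ℂ → ℝ be continuous on D⁺ ∪ I with p₁(z) = ∂₁y(z) and p₂(z) = ∂₂y(z) for all z ∈ D⁺. Assume the Signorini conditions on I: for every x ∈ I, ȳ(x) ≥ 0, −p₂(x) ≥ 0 (the outward normal derivative of the upper half-plane is −∂₂), and ȳ(x)·p₂(x) = 0. Then the tangential derivative times the normal derivative vanishes on the Signorini boundary: p₁(x)·p₂(x) = 0 for every x ∈ I. -/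

import Mathlib

open Complex

/-- Lemma 2.2 of the paper for a flat piece of the Signorini boundary: if `y` is differentiable
on the open upper half-disk `D⁺`, `ȳ, p₁, p₂` are continuous extensions of `y, ∂₁y, ∂₂y` to
`D⁺ ∪ I` (where `I` is the open diameter), and the Signorini conditions
`ȳ ≥ 0`, `−p₂ ≥ 0`, `ȳ·p₂ = 0` hold on `I`, then `p₁·p₂ = 0` on `I`. -/
theorem tangential_mul_normal_eq_zero_on_signorini_boundary
    (ρ : ℝ) (hρ : 0 < ρ)
    (D : Set ℂ) (hD : D = {z : ℂ | ‖z‖ < ρ ∧ 0 < z.im})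
    (I : Set ℂ) (hI : I = {z : ℂ | z.im = 0 ∧ |z.re| < ρ})
    (y ybar p₁ p₂ : ℂ → ℝ)
    (hy : ∀ z ∈ D, DifferentiableAt ℝ y z)
    (hybar : ContinuousOn ybar (D ∪ I))
    (hybar_eq : ∀ z ∈ D, ybar z = y z)
    (hp₁ : ContinuousOn p₁ (D ∪ I))
    (hp₂ : ContinuousOn p₂ (D ∪ I))
    (hp₁_eq : ∀ z ∈ D, p₁ z = fderiv ℝ y z 1)
    (hp₂_eq : ∀ z ∈ D, p₂ z = fderiv ℝ y z Complex.I)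
    (hsig : ∀ z ∈ I, 0 ≤ ybar z ∧ 0 ≤ -p₂ z ∧ ybar z * p₂ z = 0) :
    ∀ z ∈ I, p₁ z * p₂ z = 0 := by
  intro z hzI
  by_contra hne
  have hzDI : z ∈ D ∪ I := Or.inr hzI
  obtain ⟨hzim, hzre⟩ : z.im = 0 ∧ |z.re| < ρ := by rw [hI] at hzI; exact hzI
  obtain ⟨hy0, hp2le, hyp2⟩ := hsig z (by rw [hI]; exact ⟨hzim, hzre⟩)
  have hp2ne : p₂ z ≠ 0 := fun h => hne (by rw [h, mul_zero])
  have hcne : p₁ z ≠ 0 := fun h => hne (by rw [h, zero_mul])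
  have hp2neg : p₂ z < 0 := lt_of_le_of_ne (by linarith) hp2ne
  have hybar0 : ybar z = 0 := by
    rcases mul_eq_zero.mp hyp2 with h | h
    · exact h
    · exact absurd h hp2ne
  set c := p₁ z with hc
  have hcpos : 0 < |c| := abs_pos.mpr hcne
  obtain ⟨δ₁, hδ₁pos, hδ₁⟩ :=
    Metric.continuousWithinAt_iff.mp (hp₁ z hzDI) (|c| / 2) (by positivity)
  obtain ⟨δ₂, hδ₂pos, hδ₂⟩ :=
    Metric.continuousWithinAt_iff.mp (hp₂ z hzDI) (-p₂ z) (by linarith)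
  set δ := min δ₁ (min δ₂ (ρ - |z.re|)) with hδdef
  have hδpos : 0 < δ := lt_min hδ₁pos (lt_min hδ₂pos (by linarith))
  have hδ1 : δ ≤ δ₁ := min_le_left _ _
  have hδ2 : δ ≤ δ₂ := le_trans (min_le_right _ _) (min_le_left _ _)
  have hδρ : δ ≤ ρ - |z.re| := le_trans (min_le_right _ _) (min_le_right _ _)
  set s := δ / 4 with hsdef
  have hspos : 0 < s := by positivity
  have habs_z : ‖z‖ = |z.re| := by
    have hz' : z = (z.re : ℂ) := by apply Complex.ext <;> simp [hzim]
    rw [hz']; simp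
  -- membership of interior points
  have hmem : ∀ t ε : ℝ, 0 ≤ t → t ≤ s → 0 < ε → ε ≤ s →
      (z + ↑t + ↑ε * Complex.I ∈ D ∧ dist (z + ↑t + ↑ε * Complex.I) z < δ) := by
    intro t ε ht hts hε hεs
    have habs : ‖(↑t + ↑ε * Complex.I : ℂ)‖ ≤ t + ε := by
      calc ‖(↑t + ↑ε * Complex.I : ℂ)‖
          ≤ ‖(↑t : ℂ)‖ + ‖(↑ε * Complex.I : ℂ)‖ := norm_add_le _ _
        _ = |t| + |ε| := by simp
        _ = t + ε := by rw [_root_.abs_of_nonneg ht, _root_.abs_of_nonneg hε.le]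
    have hdist : dist (z + ↑t + ↑ε * Complex.I) z < δ := by
      have heq : z + ↑t + ↑ε * Complex.I - z = ↑t + ↑ε * Complex.I := by ring
      rw [Complex.dist_eq, heq]
      calc ‖(↑t + ↑ε * Complex.I : ℂ)‖ ≤ t + ε := habs
        _ ≤ s + s := add_le_add hts hεs
        _ < δ := by rw [hsdef]; linarith
    refine ⟨?_, hdist⟩
    rw [hD]
    constructor
    · calc ‖z + ↑t + ↑ε * Complex.I‖
          = ‖z + (↑t + ↑ε * Complex.I)‖ := by ring_nf
        _ ≤ ‖z‖ + ‖(↑t + ↑ε * Complex.I : ℂ)‖ := norm_add_le _ _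
        _ ≤ |z.re| + (t + ε) := by rw [habs_z]; exact add_le_add_right habs _
        _ ≤ |z.re| + (s + s) := by have := add_le_add hts hεs; linarith
        _ < ρ := by rw [hsdef] at *; linarith
    · show 0 < (z + ↑t + ↑ε * Complex.I).im
      simp [hzim, hε]
  -- sign normalization
  set σ : ℝ := if 0 ≤ c then 1 else -1 with hσdef
  have hσc : σ * c = |c| := by
    rw [hσdef]; split_ifs with h
    · rw [one_mul, _root_.abs_of_nonneg h]
    · rw [neg_one_mul, _root_.abs_of_neg (lt_of_not_ge h)]
  have hσabs : |σ| = 1 := by rw [hσdef]; split_ifs <;> simp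
  have hkey : ∀ d : ℝ, |d - c| < |c| / 2 → |c| / 2 ≤ σ * d := by
    intro d hd
    have h1 : σ * d = |c| + σ * (d - c) := by rw [mul_sub, hσc]; ring
    have h2 : |σ * (d - c)| < |c| / 2 := by rw [abs_mul, hσabs, one_mul]; exact hd
    have h3 := (abs_lt.mp h2).1
    linarith
  -- quantitative increment at height ε
  have hineq : ∀ ε : ℝ, 0 < ε → ε ≤ s →
      |c| / 2 * s ≤ σ * ybar (z + ↑s + ↑ε * Complex.I) - σ * ybar (z + ↑ε * Complex.I) := by
    intro ε hε hεs
    set g : ℝ → ℝ := fun t => σ * y (z + ↑t + ↑ε * Complex.I) - |c| / 2 * t with hgdef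
    have hgderiv : ∀ t ∈ Set.Icc (0 : ℝ) s,
        HasDerivAt g (σ * p₁ (z + ↑t + ↑ε * Complex.I) - |c| / 2) t := by
      rintro t ⟨ht0, hts⟩
      obtain ⟨hwD, _⟩ := hmem t ε ht0 hts hε hεs
      have hu : HasDerivAt (fun t : ℝ => z + ↑t + ↑ε * Complex.I) 1 t := by
        have h1 : HasDerivAt (fun t : ℝ => (t : ℂ)) 1 t := by
          simpa using (hasDerivAt_id t).ofReal_comp
        simpa using ((h1.const_add z).add_const (↑ε * Complex.I))
      have hcomp := HasFDerivAt.comp_hasDerivAt t ((hy _ hwD).hasFDerivAt) hu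
      have hder : HasDerivAt (fun t : ℝ => y (z + ↑t + ↑ε * Complex.I))
          (p₁ (z + ↑t + ↑ε * Complex.I)) t := by
        rw [hp₁_eq _ hwD]
        exact hcomp
      have h := (hder.const_mul σ).sub ((hasDerivAt_id t).const_mul (|c| / 2))
      rw [mul_one] at h
      exact h
    have hmono : MonotoneOn g (Set.Icc 0 s) := by
      apply monotoneOn_of_deriv_nonneg (convex_Icc 0 s)
      · exact fun t ht => ((hgderiv t ht).continuousAt).continuousWithinAt
      · intro t ht
        rw [interior_Icc] at ht
        exact (hgderiv t ⟨ht.1.le, ht.2.le⟩).differentiableAt.differentiableWithinAt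
      · intro t ht
        rw [interior_Icc] at ht
        rw [(hgderiv t ⟨ht.1.le, ht.2.le⟩).deriv]
        obtain ⟨hwD, hwdist⟩ := hmem t ε ht.1.le ht.2.le hε hεs
        have hd := hδ₁ (Or.inl hwD) (lt_of_lt_of_le hwdist hδ1)
        rw [Real.dist_eq] at hd
        linarith [hkey _ hd]
    have hg0s := hmono (Set.left_mem_Icc.mpr hspos.le) (Set.right_mem_Icc.mpr hspos.le) hspos.le
    have hD0 : z + ↑(0:ℝ) + ↑ε * Complex.I ∈ D := (hmem 0 ε le_rfl hspos.le hε hεs).1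
    have hDs : z + ↑s + ↑ε * Complex.I ∈ D := (hmem s ε hspos.le le_rfl hε hεs).1
    rw [show z + ((0:ℝ):ℂ) + ↑ε * Complex.I = z + ↑ε * Complex.I by norm_num] at hD0
    have e0 : ybar (z + ↑ε * Complex.I) = y (z + ↑ε * Complex.I) := hybar_eq _ hD0
    have es : ybar (z + ↑s + ↑ε * Complex.I) = y (z + ↑s + ↑ε * Complex.I) :=
      hybar_eq _ hDs
    rw [hgdef] at hg0s
    simp only [Complex.ofReal_zero, add_zero, mul_zero, sub_zero] at hg0s
    rw [e0, es]
    linarith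
  -- ybar vanishes at z + s
  have hzsI : (z + ↑s) ∈ I := by
    rw [hI]
    constructor
    · simp [hzim]
    · have : (z + (↑s : ℂ)).re = z.re + s := by simp
      rw [this]
      calc |z.re + s| ≤ |z.re| + |s| := abs_add_le _ _
        _ = |z.re| + s := by rw [_root_.abs_of_nonneg hspos.le]
        _ < ρ := by rw [hsdef] at *; linarith
  have hzs_dist : dist (z + (↑s : ℂ)) z < δ := by
    have heq : z + (↑s : ℂ) - z = ↑s := by ring
    rw [Complex.dist_eq, heq]
    simp only [Complex.norm_real, Real.norm_eq_abs]
    rw [_root_.abs_of_nonneg hspos.le, hsdef]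
    linarith
  have hp2s : p₂ (z + ↑s) < 0 := by
    have hd := hδ₂ (Or.inr hzsI) (lt_of_lt_of_le hzs_dist hδ2)
    rw [Real.dist_eq] at hd
    have := (abs_lt.mp hd).2
    linarith
  have hybars : ybar (z + ↑s) = 0 := by
    obtain ⟨_, _, h⟩ := hsig _ hzsI
    rcases mul_eq_zero.mp h with h | h
    · exact h
    · exact absurd h (ne_of_lt hp2s)
  -- limits as ε → 0⁺
  have hlim : ∀ w : ℂ, w ∈ D ∪ I → (∀ ε : ℝ, 0 < ε → ε ≤ s → w + ↑ε * Complex.I ∈ D) →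
      Filter.Tendsto (fun ε : ℝ => ybar (w + ↑ε * Complex.I))
        (nhdsWithin 0 (Set.Ioi 0)) (nhds (ybar w)) := by
    intro w hw hmemw
    have hcont : Continuous (fun ε : ℝ => w + ↑ε * Complex.I) :=
      continuous_const.add (Complex.continuous_ofReal.mul continuous_const)
    have h1 : Filter.Tendsto (fun ε : ℝ => w + ↑ε * Complex.I)
        (nhdsWithin 0 (Set.Ioi 0)) (nhds w) := by
      have h0 := (hcont.tendsto 0).mono_left
        (nhdsWithin_le_nhds : nhdsWithin (0:ℝ) (Set.Ioi 0) ≤ nhds 0)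
      simpa using h0
    have h2 : Filter.Tendsto (fun ε : ℝ => w + ↑ε * Complex.I)
        (nhdsWithin 0 (Set.Ioi 0)) (nhdsWithin w (D ∪ I)) := by
      apply tendsto_nhdsWithin_of_tendsto_nhds_of_eventually_within _ h1
      filter_upwards [Ioc_mem_nhdsGT_of_mem (Set.mem_Ico.mpr ⟨le_rfl, hspos⟩)] with ε hε
      exact Or.inl (hmemw ε hε.1 hε.2)
    exact (hybar w hw).tendsto.comp h2
  have hlim0 := hlim z hzDI (fun ε hε hεs => by
    simpa using (hmem 0 ε le_rfl hspos.le hε hεs).1)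
  have hlims := hlim (z + ↑s) (Or.inr hzsI) (fun ε hε hεs =>
    (hmem s ε hspos.le le_rfl hε hεs).1)
  have hF : Filter.Tendsto
      (fun ε : ℝ => σ * ybar (z + ↑s + ↑ε * Complex.I) - σ * ybar (z + ↑ε * Complex.I))
      (nhdsWithin 0 (Set.Ioi 0)) (nhds (σ * ybar (z + ↑s) - σ * ybar z)) :=
    (hlims.const_mul σ).sub (hlim0.const_mul σ)
  simp only [hybar0, hybars, mul_zero, sub_zero] at hF
  have hev : ∀ᶠ ε : ℝ in nhdsWithin 0 (Set.Ioi 0),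
      |c| / 2 * s ≤ σ * ybar (z + ↑s + ↑ε * Complex.I) - σ * ybar (z + ↑ε * Complex.I) := by
    filter_upwards [Ioc_mem_nhdsGT_of_mem (Set.mem_Ico.mpr ⟨le_rfl, hspos⟩)] with ε hε
    exact hineq ε hε.1 hε.2
  have hle : |c| / 2 * s ≤ 0 := ge_of_tendsto hF hev
  have : 0 < |c| / 2 * s := by positivity
  linarith
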